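/- There exists ε > 0 and a function ρ, analytic on the disk {u ∈ ℂ : |u − 1| < ε}, such that ρ(1) = π/2, G(ρ(u), u) = 0 for all |u − 1| < ε, and ρ is given explicitly by ρ(u) = (2/√(1−2u))·artanh(√(1−2u)) = (1/√(1−2u))·log((1 + √(1−2u))/(1 − √(1−2u))), where the branches of the square root and logarithm are chosen so that ρ(1) = π/2 (the value is independent of the choice of square root since the expression is even in √(1−2u)). -/

import Mathlib

open Complex



/-- The entire function
`G(z,u) = cosh((z/2)√(1−2u)) − sinh((z/2)√(1−2u))/√(1−2u)`,
defined by its (everywhere convergent) power series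
`G(z,u) = Σ_m (1−2u)^m [ (z/2)^{2m}/(2m)! − (z/2)^{2m+1}/(2m+1)! ]`,
which makes sense for all `z, u ∈ ℂ` and is independent of the branch of the
square root `√(1−2u)`. -/
noncomputable def G (z u : ℂ) : ℂ :=
  ∑' m : ℕ, (1 - 2 * u) ^ m *
    ((z / 2) ^ (2 * m) / (Nat.factorial (2 * m) : ℂ)
      - (z / 2) ^ (2 * m + 1) / (Nat.factorial (2 * m + 1) : ℂ))



-- cosh power series
lemma hasSum_cosh' (x : ℂ) :
    HasSum (fun n : ℕ => x ^ (2 * n) / ((2 * n).factorial : ℂ)) (Complex.cosh x) := by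
  have h := Complex.hasSum_cos' (-Complex.I * x)
  have h1 : -Complex.I * x * Complex.I = x := by
    rw [show -Complex.I * x * Complex.I = -(Complex.I*Complex.I) * x by ring, Complex.I_mul_I]; ring
  rw [h1] at h
  have h2 : Complex.cos (-Complex.I * x) = Complex.cosh x := by
    rw [show -Complex.I * x = -(x * Complex.I) by ring, Complex.cos_neg, Complex.cos_mul_I]
  rwa [h2] at h

lemma hasSum_sinh' (x : ℂ) :
    HasSum (fun n : ℕ => x ^ (2 * n + 1) / ((2 * n + 1).factorial : ℂ)) (Complex.sinh x) := by
  have h := (Complex.hasSum_sin' (-Complex.I * x)).mul_right Complex.I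
  have h1 : -Complex.I * x * Complex.I = x := by
    rw [show -Complex.I * x * Complex.I = -(Complex.I*Complex.I) * x by ring, Complex.I_mul_I]; ring
  rw [h1] at h
  have h2 : Complex.sin (-Complex.I * x) * Complex.I = Complex.sinh x := by
    rw [show -Complex.I * x = -(x * Complex.I) by ring, Complex.sin_neg, Complex.sin_mul_I]
    simp [Complex.I_sq]
    ring_nf
    simp [Complex.I_sq]
  rw [h2] at h
  convert h using 2 with n
  · rfl
  rw [div_mul_cancel₀ _ Complex.I_ne_zero]

lemma G_eq (z u s : ℂ) (hs : s ≠ 0) (h2 : s ^ 2 = 1 - 2 * u) :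
    G z u = Complex.cosh (z / 2 * s) - s⁻¹ * Complex.sinh (z / 2 * s) := by
  refine HasSum.tsum_eq ?_
  have H := (hasSum_cosh' (z / 2 * s)).sub ((hasSum_sinh' (z / 2 * s)).mul_left s⁻¹)
  convert H using 2 with m
  · rfl
  have f1 : ((2 * m).factorial : ℂ) ≠ 0 := Nat.cast_ne_zero.2 (Nat.factorial_ne_zero _)
  have f2 : ((2 * m + 1).factorial : ℂ) ≠ 0 := Nat.cast_ne_zero.2 (Nat.factorial_ne_zero _)
  have hss : s⁻¹ * s ^ (2 * m + 1) = s ^ (2 * m) := by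
    rw [pow_succ, ← mul_assoc, mul_comm _ s, ← mul_assoc, mul_inv_cancel₀ hs, one_mul]
  rw [← h2, ← pow_mul, mul_pow, mul_pow, mul_sub]
  congr 1
  · ring
  · rw [← hss]; ring

noncomputable def s₀ (u : ℂ) : ℂ := Complex.I * Complex.exp (Complex.log (2 * u - 1) / 2)

lemma s0_one : s₀ 1 = Complex.I := by
  simp [s₀]
  norm_num

lemma s0_analyticAt {u : ℂ} (h : 2 * u - 1 ∈ Complex.slitPlane) : AnalyticAt ℂ s₀ u := by
  have h1 : AnalyticAt ℂ (fun v : ℂ => 2 * v - 1) u := (analyticAt_const.mul analyticAt_id).sub analyticAt_const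
  have h2a : AnalyticAt ℂ Complex.log (2 * u - 1) := analyticAt_clog h
  have h3 : AnalyticAt ℂ (fun v : ℂ => Complex.log (2 * v - 1)) u := by
    have := AnalyticAt.comp (f := fun v : ℂ => 2*v-1) (x := u) h2a h1
    exact this
  have h2 : AnalyticAt ℂ (fun v : ℂ => Complex.log (2 * v - 1) / 2) u :=
    h3.div analyticAt_const (by norm_num)
  exact analyticAt_const.mul (analyticAt_cexp.comp h2)

lemma s0_sq {u : ℂ} (h : 2 * u - 1 ∈ Complex.slitPlane) : (s₀ u) ^ 2 = 1 - 2 * u := by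
  have hne : 2 * u - 1 ≠ 0 := Complex.slitPlane_ne_zero h
  have : Complex.exp (Complex.log (2 * u - 1) / 2) ^ 2 = 2 * u - 1 := by
    rw [sq, ← Complex.exp_add]
    rw [show Complex.log (2*u-1)/2 + Complex.log (2*u-1)/2 = Complex.log (2*u-1) by ring]
    exact Complex.exp_log hne
  rw [s₀]
  rw [mul_pow, Complex.I_sq, this]
  ring

noncomputable def rho (u : ℂ) : ℂ :=
  (s₀ u)⁻¹ * Complex.log ((1 + s₀ u) / (1 - s₀ u))

lemma rho_one : rho 1 = (Real.pi : ℂ) / 2 := by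
  have h10 : (1 : ℂ) - Complex.I ≠ 0 := by
    simp [sub_eq_zero]
    intro h; simpa using congrArg Complex.im h
  have hI : ((1 : ℂ) + Complex.I) / (1 - Complex.I) = Complex.I := by
    rw [div_eq_iff h10]
    linear_combination Complex.I_sq
  rw [rho, s0_one, hI, Complex.log_I]
  field_simp [Complex.I_ne_zero]

lemma rho_analyticAt {u : ℂ} (h1 : 2 * u - 1 ∈ Complex.slitPlane) (h2 : s₀ u ≠ 0)
    (h3 : 1 - s₀ u ≠ 0) (h5 : (1 + s₀ u) / (1 - s₀ u) ∈ Complex.slitPlane) :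
    AnalyticAt ℂ rho u := by
  have hsA : AnalyticAt ℂ s₀ u := s0_analyticAt h1
  have hw : AnalyticAt ℂ (fun v => (1 + s₀ v) / (1 - s₀ v)) u :=
    (analyticAt_const.add hsA).div (analyticAt_const.sub hsA) h3
  have hlog : AnalyticAt ℂ (fun v => Complex.log ((1 + s₀ v) / (1 - s₀ v))) u := by
    have := AnalyticAt.comp (f := fun v => (1 + s₀ v) / (1 - s₀ v)) (x := u)
      (analyticAt_clog h5) hw
    exact this
  exact (hsA.inv h2).mul hlog

lemma G_rho_zero {u : ℂ} (h1 : 2 * u - 1 ∈ Complex.slitPlane) (h2 : s₀ u ≠ 0)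
    (h3 : 1 - s₀ u ≠ 0) (h5 : (1 + s₀ u) / (1 - s₀ u) ∈ Complex.slitPlane) :
    G (rho u) u = 0 := by
  set s := s₀ u with hsdef
  set w : ℂ := (1 + s) / (1 - s) with hwdef
  set L : ℂ := Complex.log w with hLdef
  have hG := G_eq (rho u) u s h2 (s0_sq h1)
  have harg : rho u / 2 * s = L / 2 := by
    rw [rho]
    simp only [← hsdef, ← hwdef, ← hLdef]
    field_simp
  rw [hG, harg]
  set a : ℂ := Complex.exp (L / 2) with hadef
  have ha : a ≠ 0 := Complex.exp_ne_zero _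
  have hwne : w ≠ 0 := Complex.slitPlane_ne_zero h5
  have ha2 : a * a = w := by
    rw [hadef, ← Complex.exp_add, show L / 2 + L / 2 = L by ring, hLdef]
    exact Complex.exp_log hwne
  have hkey : s * (a * a + 1) = a * a - 1 := by
    rw [ha2, hwdef]
    field_simp
    ring
  rw [Complex.cosh, Complex.sinh, ← hadef, Complex.exp_neg, ← hadef]
  field_simp
  linear_combination hkey

lemma rho_formula {u : ℂ} (h1 : 2 * u - 1 ∈ Complex.slitPlane) (h2 : s₀ u ≠ 0)
    (h3 : 1 - s₀ u ≠ 0) (h4 : 1 + s₀ u ≠ 0)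
    (h5 : (1 + s₀ u) / (1 - s₀ u) ∈ Complex.slitPlane) :
    ∀ s : ℂ, s ^ 2 = 1 - 2 * u → rho u = s⁻¹ * Complex.log ((1 + s) / (1 - s)) := by
  intro s hs
  have hcases : (s - s₀ u) * (s + s₀ u) = 0 := by
    linear_combination hs - s0_sq h1
  rcases mul_eq_zero.1 hcases with h | h
  · rw [sub_eq_zero] at h
    rw [h]; rfl
  · have hneg : s = -(s₀ u) := eq_neg_of_add_eq_zero_left h
    have hinv : ((1 + s₀ u) / (1 - s₀ u))⁻¹ = (1 - s₀ u) / (1 + s₀ u) := by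
      rw [inv_div]
    have hlog : Complex.log ((1 - s₀ u) / (1 + s₀ u))
        = -Complex.log ((1 + s₀ u) / (1 - s₀ u)) := by
      rw [← hinv, Complex.log_inv _ (Complex.slitPlane_arg_ne_pi h5)]
    rw [hneg, show (1 : ℂ) + -(s₀ u) = 1 - s₀ u by ring,
      show (1 : ℂ) - -(s₀ u) = 1 + s₀ u by ring, hlog, rho]
    rw [inv_neg]
    ring

/-- near `u = 1` there is an analytic function `ρ` with `ρ(1) = π/2`,
`G(ρ(u),u) = 0`, given explicitly by `ρ(u) = (1/√(1−2u))·log((1+√(1−2u))/(1−√(1−2u)))`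
(for either choice of the square root `s` of `1−2u`). -/
theorem movable_singularity_exists :
    ∃ ε : ℝ, 0 < ε ∧ ∃ ρ : ℂ → ℂ,
      AnalyticOnNhd ℂ ρ (Metric.ball (1 : ℂ) ε) ∧
      ρ 1 = (Real.pi : ℂ) / 2 ∧
      ∀ u ∈ Metric.ball (1 : ℂ) ε,
        G (ρ u) u = 0 ∧
        ∀ s : ℂ, s ^ 2 = 1 - 2 * u →
          ρ u = s⁻¹ * Complex.log ((1 + s) / (1 - s)) := by
  have hmem1 : (2 : ℂ) * 1 - 1 ∈ Complex.slitPlane := by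
    rw [Complex.mem_slitPlane_iff]
    norm_num
  have hs0c : ContinuousAt s₀ 1 := (s0_analyticAt hmem1).continuousAt
  have hIne : (Complex.I : ℂ) ≠ 0 := Complex.I_ne_zero
  have h1mI : (1 : ℂ) - Complex.I ≠ 0 := by
    simp [sub_eq_zero]
    intro h; simpa using congrArg Complex.im h
  have h1pI : (1 : ℂ) + Complex.I ≠ 0 := by
    intro h
    have := congrArg Complex.im h
    simpa using this
  have hwI : ((1 : ℂ) + Complex.I) / (1 - Complex.I) = Complex.I := by
    rw [div_eq_iff h1mI]
    linear_combination Complex.I_sq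
  -- all conditions hold eventually near 1
  have E1 : ∀ᶠ u in nhds (1 : ℂ), 2 * u - 1 ∈ Complex.slitPlane := by
    have hc : ContinuousAt (fun u : ℂ => 2 * u - 1) 1 := by fun_prop
    exact hc.eventually_mem (Complex.isOpen_slitPlane.mem_nhds hmem1)
  have E2 : ∀ᶠ u in nhds (1 : ℂ), s₀ u ≠ 0 := by
    have := hs0c.eventually_mem (s := {(0 : ℂ)}ᶜ)
      (isOpen_compl_singleton.mem_nhds (by rw [s0_one]; exact hIne))
    simpa using this
  have E3 : ∀ᶠ u in nhds (1 : ℂ), 1 - s₀ u ≠ 0 := by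
    have hc : ContinuousAt (fun u => 1 - s₀ u) 1 := continuousAt_const.sub hs0c
    have := hc.eventually_mem (s := {(0 : ℂ)}ᶜ)
      (isOpen_compl_singleton.mem_nhds (by rw [s0_one]; exact h1mI))
    simpa using this
  have E4 : ∀ᶠ u in nhds (1 : ℂ), 1 + s₀ u ≠ 0 := by
    have hc : ContinuousAt (fun u => 1 + s₀ u) 1 := continuousAt_const.add hs0c
    have := hc.eventually_mem (s := {(0 : ℂ)}ᶜ)
      (isOpen_compl_singleton.mem_nhds (by rw [s0_one]; exact h1pI))
    simpa using this
  have E5 : ∀ᶠ u in nhds (1 : ℂ), (1 + s₀ u) / (1 - s₀ u) ∈ Complex.slitPlane := by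
    have hc : ContinuousAt (fun u => (1 + s₀ u) / (1 - s₀ u)) 1 :=
      (continuousAt_const.add hs0c).div (continuousAt_const.sub hs0c)
        (by rw [s0_one]; exact h1mI)
    refine hc.eventually_mem (Complex.isOpen_slitPlane.mem_nhds ?_)
    rw [s0_one, hwI, Complex.mem_slitPlane_iff]
    simp
  have E := ((((E1.and E2).and E3).and E4).and E5)
  rw [Metric.eventually_nhds_iff_ball] at E
  obtain ⟨ε, hε, hball⟩ := E
  refine ⟨ε, hε, rho, ?_, rho_one, ?_⟩
  · intro u hu
    obtain ⟨⟨⟨⟨h1, h2⟩, h3⟩, h4⟩, h5⟩ := hball u hu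
    exact rho_analyticAt h1 h2 h3 h5
  · intro u hu
    obtain ⟨⟨⟨⟨h1, h2⟩, h3⟩, h4⟩, h5⟩ := hball u hu
    exact ⟨G_rho_zero h1 h2 h3 h5, rho_formula h1 h2 h3 h4 h5⟩
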